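/- Let X be a nonzero complex Banach space, A a bounded operator on X with spectral radius ρ(A), and let c₁, …, c_j ∈ ℂ (j ≥ 1) satisfy |c_k| ≠ ρ(A) for every k. Then the limit as n → ∞ of ‖(c₁ⁿ I − Aⁿ)(c₂ⁿ I − Aⁿ) ⋯ (c_jⁿ I − Aⁿ)‖^{1/n} exists and equals the product over k = 1, …, j of max(ρ(A), |c_k|). -/

import Mathlib

open Filter Topology Polynomial

lemma aux_const_rpow (c : ℝ) (hc : 0 < c) :
    Tendsto (fun n : ℕ => c ^ ((n : ℝ)⁻¹)) atTop (𝓝 1) := by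
  have h : Tendsto (fun n : ℕ => Real.log c * (n : ℝ)⁻¹) atTop (𝓝 0) := by
    simpa using tendsto_inv_atTop_nhds_zero_nat.const_mul (Real.log c)
  have h2 := (Real.continuous_exp.tendsto 0).comp h
  simpa [Function.comp_def, Real.rpow_def_of_pos hc, Real.exp_zero] using h2

lemma aux_tendsto_one {x : ℕ → ℝ} {L : ℝ} (hL : 0 < L)
    (hx : Tendsto x atTop (𝓝 L)) :
    Tendsto (fun n : ℕ => x n ^ ((n : ℝ)⁻¹)) atTop (𝓝 1) := by
  have hev1 : ∀ᶠ n in atTop, L / 2 ≤ x n :=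
    hx.eventually (eventually_ge_nhds (by linarith))
  have hev2 : ∀ᶠ n in atTop, x n ≤ L + 1 :=
    hx.eventually (eventually_le_nhds (by linarith))
  refine tendsto_of_tendsto_of_tendsto_of_le_of_le'
    (aux_const_rpow (L / 2) (by linarith)) (aux_const_rpow (L + 1) (by linarith)) ?_ ?_
  · filter_upwards [hev1] with n hn
    exact Real.rpow_le_rpow (by linarith) hn (by positivity)
  · filter_upwards [hev1, hev2] with n hn hn2
    exact Real.rpow_le_rpow (by linarith) hn2 (by positivity)

lemma aux_abs_pow (a r : ℝ) (ha : 0 ≤ a) (hr : 0 ≤ r) (hne : a ≠ r) :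
    Tendsto (fun n : ℕ => |a ^ n - r ^ n| ^ ((n : ℝ)⁻¹)) atTop (𝓝 (max r a)) := by
  set m := max a r with hm
  set s := min a r with hs
  have hsm : s < m := min_lt_max.mpr hne
  have hs0 : 0 ≤ s := le_min ha hr
  have hm0 : 0 < m := lt_of_le_of_lt hs0 hsm
  set q := s / m with hq
  have hq0 : 0 ≤ q := div_nonneg hs0 hm0.le
  have hq1 : q < 1 := (div_lt_one hm0).mpr hsm
  have hsq : s = m * q := by rw [hq, mul_div_assoc', mul_div_cancel_left₀ _ hm0.ne']
  have key : ∀ n : ℕ, |a ^ n - r ^ n| = m ^ n * (1 - q ^ n) := by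
    intro n
    have h1 : |a ^ n - r ^ n| = m ^ n - s ^ n := by
      rcases le_total a r with h | h
      · rw [abs_of_nonpos (by simpa using pow_le_pow_left₀ ha h n)]
        rw [hm, hs, max_eq_right h, min_eq_left h]; ring
      · rw [abs_of_nonneg (by simpa using pow_le_pow_left₀ hr h n)]
        rw [hm, hs, max_eq_left h, min_eq_right h]
    rw [h1, hsq, mul_pow]; ring
  have hlim : Tendsto (fun n : ℕ => m * (1 - q ^ n) ^ ((n : ℝ)⁻¹)) atTop (𝓝 m) := by
    have h1 : Tendsto (fun n : ℕ => 1 - q ^ n) atTop (𝓝 1) := by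
      simpa using tendsto_const_nhds.sub
        (tendsto_pow_atTop_nhds_zero_of_lt_one hq0 hq1)
    simpa using (aux_tendsto_one one_pos h1).const_mul m
  have heq : ∀ᶠ n : ℕ in atTop, m * (1 - q ^ n) ^ ((n : ℝ)⁻¹)
      = |a ^ n - r ^ n| ^ ((n : ℝ)⁻¹) := by
    filter_upwards [eventually_ge_atTop 1] with n hn
    have hn0 : (n : ℝ) ≠ 0 := Nat.cast_ne_zero.mpr (by omega)
    have hq' : 0 ≤ 1 - q ^ n := by
      have := pow_le_one₀ hq0 hq1.le (n := n); linarith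
    rw [key, Real.mul_rpow (by positivity) hq']
    congr 1
    rw [← Real.rpow_natCast m n, ← Real.rpow_mul hm0.le,
      mul_inv_cancel₀ hn0, Real.rpow_one]
  have := hlim.congr' heq
  rwa [hm, max_comm] at this

lemma aux_add (a : ℝ) (ha : 0 ≤ a) (b : ℕ → ℝ) (hb : ∀ n, 0 ≤ b n) (r : ℝ)
    (hbr : Tendsto (fun n : ℕ => b n ^ ((n : ℝ)⁻¹)) atTop (𝓝 r)) :
    Tendsto (fun n : ℕ => (a ^ n + b n) ^ ((n : ℝ)⁻¹)) atTop (𝓝 (max r a)) := by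
  set M : ℕ → ℝ := fun n => max a (b n ^ ((n : ℝ)⁻¹)) with hM
  have hM0 : ∀ n, 0 ≤ M n := fun n => le_max_of_le_left ha
  have hMlim : Tendsto M atTop (𝓝 (max a r)) := tendsto_const_nhds.max hbr
  have hbn : ∀ n : ℕ, 1 ≤ n → b n = (b n ^ ((n : ℝ)⁻¹)) ^ n := by
    intro n hn
    have hn0 : (n : ℝ) ≠ 0 := Nat.cast_ne_zero.mpr (by omega)
    rw [← Real.rpow_natCast (b n ^ ((n : ℝ)⁻¹)) n, ← Real.rpow_mul (hb n),
      inv_mul_cancel₀ hn0, Real.rpow_one]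
  have hlow : ∀ᶠ n in atTop, M n ≤ (a ^ n + b n) ^ ((n : ℝ)⁻¹) := by
    filter_upwards [eventually_ge_atTop 1] with n hn
    have hn0 : (n : ℝ) ≠ 0 := Nat.cast_ne_zero.mpr (by omega)
    refine max_le ?_ ?_
    · calc a = (a ^ n) ^ ((n : ℝ)⁻¹) := by
            rw [← Real.rpow_natCast a n, ← Real.rpow_mul ha,
              mul_inv_cancel₀ hn0, Real.rpow_one]
        _ ≤ _ := Real.rpow_le_rpow (pow_nonneg ha n) (by linarith [hb n]) (by positivity)
    · exact Real.rpow_le_rpow (hb n) (by linarith [pow_nonneg ha n]) (by positivity)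
  have hhigh : ∀ᶠ n in atTop, (a ^ n + b n) ^ ((n : ℝ)⁻¹) ≤ 2 ^ ((n : ℝ)⁻¹) * M n := by
    filter_upwards [eventually_ge_atTop 1] with n hn
    have h1 : a ^ n + b n ≤ 2 * M n ^ n := by
      have ha' : a ^ n ≤ M n ^ n := pow_le_pow_left₀ ha (le_max_left _ _) n
      have hb' : b n ≤ M n ^ n := by
        rw [hbn n hn]; exact pow_le_pow_left₀ (Real.rpow_nonneg (hb n) _) (le_max_right _ _) n
      linarith
    calc (a ^ n + b n) ^ ((n : ℝ)⁻¹) ≤ (2 * M n ^ n) ^ ((n : ℝ)⁻¹) :=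
          Real.rpow_le_rpow (add_nonneg (pow_nonneg ha n) (hb n)) h1 (by positivity)
      _ = 2 ^ ((n : ℝ)⁻¹) * M n := by
          rw [Real.mul_rpow (by norm_num) (pow_nonneg (hM0 n) n)]
          congr 1
          rw [← Real.rpow_natCast (M n) n, ← Real.rpow_mul (hM0 n),
            mul_inv_cancel₀ (Nat.cast_ne_zero.mpr (by omega)), Real.rpow_one]
  have hup : Tendsto (fun n : ℕ => 2 ^ ((n : ℝ)⁻¹) * M n) atTop (𝓝 (max a r)) := by
    simpa using (aux_const_rpow 2 (by norm_num)).mul hMlim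
  have := tendsto_of_tendsto_of_tendsto_of_le_of_le' hMlim hup hlow hhigh
  rwa [max_comm] at this

theorem statement_10 {X : Type*} [NormedAddCommGroup X] [NormedSpace ℂ X] [CompleteSpace X]
    [Nontrivial X]
    (A : X →L[ℂ] X) (j : ℕ) (hj : 1 ≤ j) (c : Fin j → ℂ)
    (hc : ∀ k : Fin j, ‖c k‖ ≠ (spectralRadius ℂ A).toReal) :
    Tendsto
      (fun n : ℕ =>
        ‖(Polynomial.aeval (A ^ n) (∏ k : Fin j, (Polynomial.C (c k ^ n) - Polynomial.X)) :
            X →L[ℂ] X)‖ ^ ((n : ℝ)⁻¹))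
      atTop
      (nhds (∏ k : Fin j, max ((spectralRadius ℂ A).toReal) ‖c k‖)) := by
  set r : ℝ := (spectralRadius ℂ A).toReal with hrdef
  have hr0 : 0 ≤ r := ENNReal.toReal_nonneg
  have hfin : spectralRadius ℂ A ≠ ⊤ :=
    ((spectrum.spectralRadius_le_nnnorm A).trans_lt ENNReal.coe_lt_top).ne
  -- Gelfand formula, real version
  have hG : Tendsto (fun n : ℕ => ‖A ^ n‖ ^ ((n : ℝ)⁻¹)) atTop (𝓝 r) := by
    have h := spectrum.pow_nnnorm_pow_one_div_tendsto_nhds_spectralRadius A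
    have h2 := (ENNReal.tendsto_toReal hfin).comp h
    refine h2.congr fun n => ?_
    simp [Function.comp_def, ← ENNReal.toReal_rpow, one_div]
  -- attained spectral radius
  obtain ⟨z, hz, hznorm⟩ := spectrum.exists_nnnorm_eq_spectralRadius A
  have hzr : ‖z‖ = r := by
    have := congrArg ENNReal.toReal hznorm
    simpa using this
  set P : ℕ → (X →L[ℂ] X) := fun n =>
    Polynomial.aeval (A ^ n) (∏ k : Fin j, (Polynomial.C (c k ^ n) - Polynomial.X)) with hP
  set low : ℕ → ℝ := fun n => ∏ k : Fin j, |‖c k‖ ^ n - r ^ n| with hlowdef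
  set up : ℕ → ℝ := fun n => ∏ k : Fin j, (‖c k‖ ^ n + ‖A ^ n‖) with hupdef
  have hlow0 : ∀ n, 0 ≤ low n := fun n => Finset.prod_nonneg fun k _ => abs_nonneg _
  -- membership in spectrum
  have hzn : ∀ n : ℕ, z ^ n ∈ spectrum ℂ (A ^ n) := by
    intro n
    have := spectrum.subset_polynomial_aeval A ((Polynomial.X : ℂ[X]) ^ n)
      (Set.mem_image_of_mem _ hz)
    simpa [map_pow] using this
  have hmem : ∀ n : ℕ, (∏ k : Fin j, (c k ^ n - z ^ n)) ∈ spectrum ℂ (P n) := by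
    intro n
    have := spectrum.subset_polynomial_aeval (A ^ n)
      (∏ k : Fin j, (Polynomial.C (c k ^ n) - Polynomial.X))
      (Set.mem_image_of_mem _ (hzn n))
    simpa only [Polynomial.eval_prod, Polynomial.eval_sub, Polynomial.eval_C, Polynomial.eval_X] using this
  have hlow : ∀ n, low n ≤ ‖P n‖ := by
    intro n
    calc low n ≤ ∏ k : Fin j, ‖c k ^ n - z ^ n‖ := by
          refine Finset.prod_le_prod (fun k _ => abs_nonneg _) (fun k _ => ?_)
          have h1 : |‖c k‖ ^ n - r ^ n| = |‖c k ^ n‖ - ‖z ^ n‖| := by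
            rw [norm_pow, norm_pow, hzr]
          rw [h1]
          exact abs_norm_sub_norm_le _ _
      _ = ‖∏ k : Fin j, (c k ^ n - z ^ n)‖ := by rw [norm_prod]
      _ ≤ ‖P n‖ := spectrum.norm_le_norm_of_mem (hmem n)
  have hup : ∀ n, ‖P n‖ ≤ up n := by
    intro n
    have h1 : P n = ((List.ofFn fun k : Fin j =>
        (Polynomial.C (c k ^ n) - Polynomial.X : ℂ[X])).map
          (Polynomial.aeval (A ^ n))).prod := by
      rw [← map_list_prod, List.prod_ofFn]
    calc ‖P n‖ ≤ (((List.ofFn fun k : Fin j =>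
          (Polynomial.C (c k ^ n) - Polynomial.X : ℂ[X])).map
            (Polynomial.aeval (A ^ n))).map norm).prod := by
          rw [h1]; exact List.norm_prod_le _
      _ = ∏ k : Fin j,
            ‖Polynomial.aeval (A ^ n) (Polynomial.C (c k ^ n) - Polynomial.X)‖ := by
          rw [List.map_map, List.map_ofFn, List.prod_ofFn]; rfl
      _ ≤ up n := by
          refine Finset.prod_le_prod (fun k _ => norm_nonneg _) (fun k _ => ?_)
          calc ‖Polynomial.aeval (A ^ n) (Polynomial.C (c k ^ n) - Polynomial.X)‖
              = ‖algebraMap ℂ (X →L[ℂ] X) (c k ^ n) - A ^ n‖ := by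
                simp [map_sub]
            _ ≤ ‖algebraMap ℂ (X →L[ℂ] X) (c k ^ n)‖ + ‖A ^ n‖ := norm_sub_le _ _
            _ = ‖c k‖ ^ n + ‖A ^ n‖ := by rw [norm_algebraMap', norm_pow]
  have lowlim : Tendsto (fun n : ℕ => low n ^ ((n : ℝ)⁻¹)) atTop
      (𝓝 (∏ k : Fin j, max r ‖c k‖)) := by
    have heq : ∀ n : ℕ, low n ^ ((n : ℝ)⁻¹)
        = ∏ k : Fin j, |‖c k‖ ^ n - r ^ n| ^ ((n : ℝ)⁻¹) := fun n =>
      (Real.finset_prod_rpow _ _ (fun k _ => abs_nonneg _) _).symm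
    refine Tendsto.congr (fun n => (heq n).symm) ?_
    exact tendsto_finset_prod _ fun k _ =>
      aux_abs_pow ‖c k‖ r (norm_nonneg _) hr0 (hc k)
  have uplim : Tendsto (fun n : ℕ => up n ^ ((n : ℝ)⁻¹)) atTop
      (𝓝 (∏ k : Fin j, max r ‖c k‖)) := by
    have heq : ∀ n : ℕ, up n ^ ((n : ℝ)⁻¹)
        = ∏ k : Fin j, (‖c k‖ ^ n + ‖A ^ n‖) ^ ((n : ℝ)⁻¹) := fun n =>
      (Real.finset_prod_rpow _ _
        (fun k _ => add_nonneg (pow_nonneg (norm_nonneg _) n) (norm_nonneg _)) _).symm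
    refine Tendsto.congr (fun n => (heq n).symm) ?_
    exact tendsto_finset_prod _ fun k _ =>
      aux_add ‖c k‖ (norm_nonneg _) (fun n => ‖A ^ n‖) (fun n => norm_nonneg _) r hG
  refine tendsto_of_tendsto_of_tendsto_of_le_of_le lowlim uplim ?_ ?_
  · exact fun n => Real.rpow_le_rpow (hlow0 n) (hlow n) (by positivity)
  · exact fun n => Real.rpow_le_rpow (norm_nonneg _) (hup n) (by positivity)
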